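/- The total causal effect equals the risk difference when the protected attribute has no parents: let C be a node with pa C = ∅, let E be a node distinct from C, let c⁺, c⁻ : D C with cpt C c⁺ > 0 and cpt C c⁻ > 0, and let e⁺ : D E. Then TE(c⁺, c⁻) := P({a | a E = e⁺} | do(C = c⁺)) − P({a | a E = e⁺} | do(C = c⁻)) equals P(E = e⁺ | C = c⁺) − P(E = e⁺ | C = c⁻), where P(E = e⁺ | C = c) denotes P({a | a E = e⁺} ∩ {a | a C = c}) / P({a | a C = c}). -/

import Mathlib

set_option maxHeartbeats 1000000

open Finset in
lemma bn_marginalize {n : ℕ} (D : Fin n → Type)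
    [∀ i, Fintype (D i)] [∀ i, DecidableEq (D i)]
    (pa : Fin n → Finset (Fin n))
    (hpa : ∀ i : Fin n, ∀ j ∈ pa i, j < i)
    (cpt : ∀ i : Fin n, ((j : {x // x ∈ pa i}) → D j.1) → D i → ℝ)
    (hsum : ∀ i p, ∑ x : D i, cpt i p x = 1) :
    ∀ s : Finset (Fin n), ∀ b : ∀ i, D i,
      ∑ a ∈ Finset.univ.filter (fun a : ∀ i, D i => ∀ j ∉ s, a j = b j),
        ∏ i ∈ s, cpt i (fun j => a j.1) (a i) = 1 := by
  classical
  intro s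
  induction s using Finset.strongInduction with
  | _ s ih =>
    intro b
    rcases s.eq_empty_or_nonempty with rfl | hne
    · have : Finset.univ.filter (fun a : ∀ i, D i => ∀ j ∉ (∅ : Finset (Fin n)), a j = b j) = {b} := by
        ext a
        simp [funext_iff]
      rw [this]
      simp
    · set m := s.min' hne with hm
      have hms : m ∈ s := s.min'_mem hne
      -- fiberwise over value of a m
      have hfib : ∑ a ∈ Finset.univ.filter (fun a : ∀ i, D i => ∀ j ∉ s, a j = b j),
            ∏ i ∈ s, cpt i (fun j => a j.1) (a i)
          = ∑ x : D m, ∑ a ∈ (Finset.univ.filter (fun a : ∀ i, D i => ∀ j ∉ s, a j = b j)).filter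
              (fun a => a m = x), ∏ i ∈ s, cpt i (fun j => a j.1) (a i) :=
        (Finset.sum_fiberwise _ (fun a : (∀ i, D i) => a m) _).symm
      rw [hfib]
      have key : ∀ x : D m,
          ∑ a ∈ (Finset.univ.filter (fun a : ∀ i, D i => ∀ j ∉ s, a j = b j)).filter
              (fun a => a m = x), ∏ i ∈ s, cpt i (fun j => a j.1) (a i)
          = cpt m (fun j => b j.1) x := by
        intro x
        have hset : (Finset.univ.filter (fun a : ∀ i, D i => ∀ j ∉ s, a j = b j)).filter
              (fun a => a m = x)
            = Finset.univ.filter (fun a : ∀ i, D i => ∀ j ∉ s.erase m,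
                a j = Function.update b m x j) := by
          ext a
          simp only [Finset.mem_filter, Finset.mem_univ, true_and, Finset.mem_erase]
          constructor
          · rintro ⟨h1, h2⟩ j hj
            by_cases hjm : j = m
            · subst hjm; simpa [Function.update] using h2
            · have : j ∉ s := fun hjs => hj ⟨hjm, hjs⟩
              rw [h1 j this, Function.update_of_ne hjm]
          · intro h
            constructor
            · intro j hj
              have hjm : j ≠ m := fun e => hj (e ▸ hms)
              have := h j (fun hj2 => hj hj2.2)
              rwa [Function.update_of_ne hjm] at this
            · have := h m (by simp)
              simpa [Function.update] using this
        rw [hset]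
        have hterm : ∀ a ∈ Finset.univ.filter (fun a : ∀ i, D i => ∀ j ∉ s.erase m,
                a j = Function.update b m x j),
            ∏ i ∈ s, cpt i (fun j => a j.1) (a i)
            = cpt m (fun j => b j.1) x * ∏ i ∈ s.erase m, cpt i (fun j => a j.1) (a i) := by
          intro a ha
          simp only [Finset.mem_filter, Finset.mem_univ, true_and] at ha
          rw [← Finset.mul_prod_erase s _ hms]
          congr 1
          have ham : a m = x := by
            have := ha m (by simp)
            simpa [Function.update] using this
          have hpar : (fun j : {y // y ∈ pa m} => a j.1) = (fun j : {y // y ∈ pa m} => b j.1) := by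
            funext j
            have hjm : j.1 < m := hpa m j.1 j.2
            have hjs : j.1 ∉ s := fun hjs => absurd (s.min'_le j.1 hjs) (not_le.mpr hjm)
            have hje : j.1 ∉ s.erase m := fun h => hjs (Finset.mem_of_mem_erase h)
            rw [ha j.1 hje, Function.update_of_ne hjm.ne]
          rw [hpar, ham]
        rw [Finset.sum_congr rfl hterm, ← Finset.mul_sum,
          ih (s.erase m) (Finset.erase_ssubset hms) (Function.update b m x), mul_one]
      rw [Finset.sum_congr rfl (fun x _ => key x), hsum]



/-- The total causal effect equals the risk difference when the protected
attribute has no parents: for a node `C` with `pa C = ∅`, a node `E ≠ C`, values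
`c⁺, c⁻ : D C` with positive table entries (with `p` the trivial parent
assignment), and `e⁺ : D E`, the total effect
`TE(c⁺, c⁻) = P({a | a E = e⁺} | do(C = c⁺)) − P({a | a E = e⁺} | do(C = c⁻))`
(computed by the truncated factorization formula) equals
`P(E = e⁺ | C = c⁺) − P(E = e⁺ | C = c⁻)` (risk difference, computed with the
joint distribution of the Bayesian network). -/
theorem bn_total_effect_eq_risk_difference {n : ℕ} (D : Fin n → Type)
    [∀ i, Fintype (D i)] [∀ i, Nonempty (D i)] [∀ i, DecidableEq (D i)]
    (pa : Fin n → Finset (Fin n))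
    (hpa : ∀ i : Fin n, ∀ j ∈ pa i, j < i)
    (cpt : ∀ i : Fin n, ((j : {x // x ∈ pa i}) → D j.1) → D i → ℝ)
    (hnn : ∀ i p x, 0 ≤ cpt i p x)
    (hsum : ∀ i p, ∑ x : D i, cpt i p x = 1)
    (C : Fin n) (hC : pa C = ∅)
    (E : Fin n) (hEC : E ≠ C)
    (cplus cminus : D C) (eplus : D E)
    (p : (j : {x // x ∈ pa C}) → D j.1)
    (hplus : 0 < cpt C p cplus) (hminus : 0 < cpt C p cminus) :
    (∑ a ∈ Finset.univ.filter (fun a : ∀ i, D i => a E = eplus ∧ a C = cplus),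
        ∏ i ∈ Finset.univ.erase C, cpt i (fun j => a j.1) (a i))
      - (∑ a ∈ Finset.univ.filter (fun a : ∀ i, D i => a E = eplus ∧ a C = cminus),
          ∏ i ∈ Finset.univ.erase C, cpt i (fun j => a j.1) (a i))
    = (∑ a ∈ Finset.univ.filter (fun a : ∀ i, D i => a E = eplus ∧ a C = cplus),
          ∏ i : Fin n, cpt i (fun j => a j.1) (a i))
        / (∑ a ∈ Finset.univ.filter (fun a : ∀ i, D i => a C = cplus),
            ∏ i : Fin n, cpt i (fun j => a j.1) (a i))
      - (∑ a ∈ Finset.univ.filter (fun a : ∀ i, D i => a E = eplus ∧ a C = cminus),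
            ∏ i : Fin n, cpt i (fun j => a j.1) (a i))
          / (∑ a ∈ Finset.univ.filter (fun a : ∀ i, D i => a C = cminus),
              ∏ i : Fin n, cpt i (fun j => a j.1) (a i)) := by
  classical
  have hp : ∀ a : ∀ i, D i, (fun j : {x // x ∈ pa C} => a j.1) = p := by
    intro a
    funext j
    exact absurd j.2 (by simp [hC])
  have hfull : ∀ a : ∀ i, D i, ∏ i : Fin n, cpt i (fun j => a j.1) (a i)
      = cpt C p (a C) * ∏ i ∈ Finset.univ.erase C, cpt i (fun j => a j.1) (a i) := by
    intro a
    rw [← Finset.mul_prod_erase Finset.univ _ (Finset.mem_univ C), hp a]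
  have key : ∀ c : D C, 0 < cpt C p c →
      (∑ a ∈ Finset.univ.filter (fun a : ∀ i, D i => a E = eplus ∧ a C = c),
          ∏ i : Fin n, cpt i (fun j => a j.1) (a i))
        / (∑ a ∈ Finset.univ.filter (fun a : ∀ i, D i => a C = c),
            ∏ i : Fin n, cpt i (fun j => a j.1) (a i))
      = ∑ a ∈ Finset.univ.filter (fun a : ∀ i, D i => a E = eplus ∧ a C = c),
          ∏ i ∈ Finset.univ.erase C, cpt i (fun j => a j.1) (a i) := by
    intro c hc
    have hnum : (∑ a ∈ Finset.univ.filter (fun a : ∀ i, D i => a E = eplus ∧ a C = c),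
          ∏ i : Fin n, cpt i (fun j => a j.1) (a i))
        = cpt C p c * ∑ a ∈ Finset.univ.filter (fun a : ∀ i, D i => a E = eplus ∧ a C = c),
            ∏ i ∈ Finset.univ.erase C, cpt i (fun j => a j.1) (a i) := by
      rw [Finset.mul_sum]
      refine Finset.sum_congr rfl fun a ha => ?_
      simp only [Finset.mem_filter] at ha
      rw [hfull a, ha.2.2]
    have hb : ∀ c : D C, ∃ b : ∀ i, D i, b C = c := fun c =>
      ⟨Function.update (fun i => Classical.arbitrary (D i)) C c, by simp⟩
    obtain ⟨b, hbc⟩ := hb c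
    have hsetc : Finset.univ.filter (fun a : ∀ i, D i => a C = c)
        = Finset.univ.filter (fun a : ∀ i, D i => ∀ j ∉ Finset.univ.erase C, a j = b j) := by
      ext a
      simp only [Finset.mem_filter, Finset.mem_univ, true_and, Finset.mem_erase, not_and]
      constructor
      · intro h j hj
        have : j = C := by
          by_contra hjc
          exact hj hjc trivial
        subst this; rw [h, hbc]
      · intro h
        have := h C (by simp)
        rw [this, hbc]
    have hden : (∑ a ∈ Finset.univ.filter (fun a : ∀ i, D i => a C = c),
          ∏ i : Fin n, cpt i (fun j => a j.1) (a i)) = cpt C p c := by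
      have : (∑ a ∈ Finset.univ.filter (fun a : ∀ i, D i => a C = c),
            ∏ i : Fin n, cpt i (fun j => a j.1) (a i))
          = cpt C p c * ∑ a ∈ Finset.univ.filter (fun a : ∀ i, D i => a C = c),
              ∏ i ∈ Finset.univ.erase C, cpt i (fun j => a j.1) (a i) := by
        rw [Finset.mul_sum]
        refine Finset.sum_congr rfl fun a ha => ?_
        simp only [Finset.mem_filter] at ha
        rw [hfull a, ha.2]
      rw [this, hsetc, bn_marginalize D pa hpa cpt hsum (Finset.univ.erase C) b, mul_one]
    rw [hnum, hden, mul_comm, mul_div_assoc, div_self hc.ne', mul_one]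
  rw [key cplus hplus, key cminus hminus]
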